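/- If F > F̄_max, then Q̄(x) > 0 for all x ∈ [0,1); in particular the replicator dynamics ẋ = x(1−x)Q̄(x) of the bribery game has no interior equilibrium in (0,1), the gradient of selection x(1−x)Q̄(x) is positive on (0,1), and the population evolves toward full cooperation (x = 1 is the attracting boundary state). -/

import Mathlib

/-- The bribery-game gradient function Q̄. -/
noncomputable def Qbar (N : ℕ) (c τ β rp α F h γ p q : ℝ) (x : ℝ) : ℝ :=
  F * c / N - c - 2 * α * β * τ * rp + β * τ * rp
    + ((N : ℝ) - 1) / N * γ * h * (q - p)
    - α * β * τ * rp * (∑ k ∈ Finset.range (N - 1), (1 - x) ^ (k + 1))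
    + (1 - α) * β * τ * rp * (∑ k ∈ Finset.range (N - 1), x ^ (k + 1))

/-- The lower threshold F̄_min for the pool multiplier in the bribery game. -/
noncomputable def Fbarmin (N : ℕ) (c τ β rp α h γ p q : ℝ) : ℝ :=
  (N * c - ((N : ℝ) - 1) * γ * h * (q - p) - N * β * τ * rp * (1 - 2 * α)
    - N * ((N : ℝ) - 1) * (1 - α) * β * τ * rp) / c

/-- The upper threshold F̄_max for the pool multiplier in the bribery game. -/
noncomputable def Fbarmax (N : ℕ) (c τ β rp α h γ p q : ℝ) : ℝ :=
  (N * c - ((N : ℝ) - 1) * γ * h * (q - p) - N * β * τ * rp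
    + N * α * β * τ * rp * ((N : ℝ) + 1)) / c

/-- If F > F̄_max then Q̄(x) > 0 on [0,1), the gradient of selection x(1−x)Q̄(x) is
positive on (0,1), and the replicator dynamics of the bribery game has no interior
equilibrium: the population evolves toward full cooperation. -/
theorem bg_cooperation_dominance (N : ℕ) (hN : 2 ≤ N) (c τ β rp α F h γ p q : ℝ)
    (hc : 0 < c) (hτ : 0 < τ) (hβ : 0 < β) (hrp : 0 < rp) (hα0 : 0 ≤ α) (hα1 : α ≤ 1)
    (hh : 0 < h) (hγ0 : 0 < γ) (hγ1 : γ ≤ 1) (hp0 : 0 ≤ p) (hp1 : p ≤ 1)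
    (hq0 : 0 ≤ q) (hq1 : q ≤ 1)
    (hF : Fbarmax N c τ β rp α h γ p q < F) :
    (∀ x : ℝ, 0 ≤ x → x < 1 → 0 < Qbar N c τ β rp α F h γ p q x) ∧
    (∀ x : ℝ, 0 < x → x < 1 → 0 < x * (1 - x) * Qbar N c τ β rp α F h γ p q x) ∧
    ¬∃ x : ℝ, 0 < x ∧ x < 1 ∧ x * (1 - x) * Qbar N c τ β rp α F h γ p q x = 0 := by
  
  have hNr : (0:ℝ) < (N:ℝ) := by positivity
  have hcast : ((N - 1 : ℕ) : ℝ) = (N:ℝ) - 1 := by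
    have : 1 ≤ N := by omega
    push_cast [Nat.cast_sub this]; ring
  have key : ∀ x : ℝ, 0 ≤ x → x < 1 → 0 < Qbar N c τ β rp α F h γ p q x := by
    intro x hx0 hx1
    have h1x : 0 ≤ 1 - x := by linarith
    have hS1 : (∑ k ∈ Finset.range (N - 1), (1 - x) ^ (k + 1)) ≤ (N:ℝ) - 1 := by
      calc (∑ k ∈ Finset.range (N - 1), (1 - x) ^ (k + 1))
          ≤ ∑ k ∈ Finset.range (N - 1), (1:ℝ) :=
            Finset.sum_le_sum (fun k _ => pow_le_one₀ h1x (by linarith))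
        _ = ((N - 1 : ℕ) : ℝ) := by simp
        _ = (N:ℝ) - 1 := hcast
    have hS2 : 0 ≤ (∑ k ∈ Finset.range (N - 1), x ^ (k + 1)) :=
      Finset.sum_nonneg (fun k _ => pow_nonneg hx0 _)
    have habr : 0 ≤ α * β * τ * rp := by positivity
    have hF' : (N:ℝ) * c - ((N:ℝ) - 1) * γ * h * (q - p) - (N:ℝ) * β * τ * rp
        + (N:ℝ) * α * β * τ * rp * ((N:ℝ) + 1) < F * c := by
      rw [Fbarmax, div_lt_iff₀ hc] at hF
      linarith
    have hmul := mul_le_mul_of_nonneg_left hS1 habr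
    have hmul2 : 0 ≤ (1 - α) * β * τ * rp * (∑ k ∈ Finset.range (N - 1), x ^ (k + 1)) := by
      have : 0 ≤ (1 - α) * β * τ * rp :=
        mul_nonneg (mul_nonneg (mul_nonneg (by linarith) hβ.le) hτ.le) hrp.le
      exact mul_nonneg this hS2
    have hfc : (N:ℝ) * (F * c / (N:ℝ)) = F * c := by field_simp
    have hdiv : (N:ℝ) * (((N:ℝ) - 1) / (N:ℝ) * γ * h * (q - p))
        = ((N:ℝ) - 1) * γ * h * (q - p) := by field_simp
    have hQN : 0 < (N:ℝ) * Qbar N c τ β rp α F h γ p q x := by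
      unfold Qbar
      nlinarith [hmul, hmul2, hF', hfc, hdiv]
    have := div_pos hQN hNr
    rwa [mul_div_cancel_left₀ _ (ne_of_gt hNr)] at this
  refine ⟨key, fun x hx0 hx1 => by
    have := key x (le_of_lt hx0) hx1
    have hx1' : 0 < 1 - x := by linarith
    positivity, ?_⟩
  rintro ⟨x, hx0, hx1, hx⟩
  have := key x (le_of_lt hx0) hx1
  have hx1' : 0 < 1 - x := by linarith
  have hpos := mul_pos (mul_pos hx0 hx1') this
  linarith
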